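/- Among all trees T on n vertices (n ≥ 3), the average Steiner 3-eccentricity satisfies aecc_3(T) ≤ n - 1, with equality if and only if T is the path P_n. -/

import Mathlib

open SimpleGraph Finset

/-- The Steiner distance of a vertex set `S` in `G`: the minimum number of edges of a
connected subgraph of `G` whose vertex set contains `S`. -/
noncomputable def steinerDist {V : Type*} [Fintype V] (G : SimpleGraph V) (S : Set V) : ℕ :=
  sInf {n | ∃ H : G.Subgraph, H.Connected ∧ S ⊆ H.verts ∧ H.edgeSet.ncard = n}

/-- The Steiner 3-eccentricity of a vertex `v`: the maximum Steiner distance over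
3-subsets of vertices containing `v`. -/
noncomputable def ecc3 {V : Type*} [Fintype V] [DecidableEq V] (G : SimpleGraph V) (v : V) : ℕ :=
  sSup {n | ∃ S : Finset V, v ∈ S ∧ S.card = 3 ∧ steinerDist G (S : Set V) = n}

/-- The average Steiner 3-eccentricity of `G`. -/
noncomputable def aecc3 {V : Type*} [Fintype V] [DecidableEq V] (G : SimpleGraph V) : ℚ :=
  (∑ v : V, (ecc3 G v : ℚ)) / (Fintype.card V : ℚ)

/-- A walk is a segment if it is a nontrivial path whose endpoints do not have degree 2
and all of whose internal vertices have degree 2. -/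
def IsSegment {V : Type*} [Fintype V] (G : SimpleGraph V) [DecidableRel G.Adj] {u v : V}
    (p : G.Walk u v) : Prop :=
  p.IsPath ∧ 0 < p.length ∧ G.degree u ≠ 2 ∧ G.degree v ≠ 2 ∧
    ∀ w ∈ p.support, w ≠ u → w ≠ v → G.degree w = 2

/-- `G` has segment sequence `l`: its edge set is partitioned into segments whose
lengths are given by `l`. -/
def HasSegmentSequence {V : Type*} [Fintype V] (G : SimpleGraph V) [DecidableRel G.Adj]
    {m : ℕ} (l : Fin m → ℕ) : Prop :=
  ∃ (u v : Fin m → V) (p : ∀ i, G.Walk (u i) (v i)),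
    (∀ i, IsSegment G (p i)) ∧
    (∀ i j, i ≠ j → ∀ e ∈ (p i).edges, e ∉ (p j).edges) ∧
    (∀ e ∈ G.edgeSet, ∃ i, e ∈ (p i).edges) ∧
    (∀ i, (p i).length = l i)

/-- A caterpillar: a tree whose internal (non-leaf) vertices induce a path. -/
def IsCaterpillar {V : Type*} [Fintype V] (G : SimpleGraph V) [DecidableRel G.Adj] : Prop :=
  G.IsTree ∧ ∃ k : ℕ, Nonempty ((G.induce {v | 2 ≤ G.degree v}) ≃g SimpleGraph.pathGraph k)

/-- Majorization of finite sequences. -/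
def Majorizes {n : ℕ} (x y : Fin n → ℕ) : Prop :=
  (∀ k : ℕ, k < n →
    ∑ i ∈ Finset.univ.filter (fun i : Fin n => (i : ℕ) < k), y i ≤
    ∑ i ∈ Finset.univ.filter (fun i : Fin n => (i : ℕ) < k), x i) ∧
  ∑ i, x i = ∑ i, y i

/-- Distance from a vertex `u` to (the support of) a walk `p`. -/
noncomputable def distToPath {V : Type*} (G : SimpleGraph V) {a b : V} (p : G.Walk a b)
    (u : V) : ℕ :=
  sInf {n | ∃ w ∈ p.support, G.dist u w = n}

/-- The eccentricity of a walk `p`: the maximum distance from a vertex to `p`. -/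
noncomputable def eccPath {V : Type*} [Fintype V] (G : SimpleGraph V) {a b : V}
    (p : G.Walk a b) : ℕ :=
  sSup {n | ∃ u : V, distToPath G p u = n}

/-- `G` is a broom `B_{n,Δ}`: obtained from a path on `n - Δ + 2` vertices by attaching
`Δ - 2` pendant vertices to an internal vertex of the path. -/
def IsBroom {V : Type*} [Fintype V] (G : SimpleGraph V) (Δ : ℕ) : Prop :=
  ∃ (a b c : V) (p : G.Walk a b), p.IsPath ∧
    p.support.length = Fintype.card V - Δ + 2 ∧
    c ∈ p.support ∧ c ≠ a ∧ c ≠ b ∧ ∀ v, v ∉ p.support → G.Adj c v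

/-! ### Auxiliary lemmas -/

namespace SimpleGraph.Walk
variable {V : Type*} {G : SimpleGraph V}

lemma getVert_injOn' {u v : V} {p : G.Walk u v} (hp : p.IsPath) :
    ∀ i ≤ p.length, ∀ j ≤ p.length, p.getVert i = p.getVert j → i = j := by
  induction p with
  | nil => intro i hi j hj _; simp only [length_nil, Nat.le_zero] at hi hj; omega
  | cons h q ih =>
    intro i hi j hj hij
    match i, j with
    | 0, 0 => rfl
    | 0, (j+1) =>
      exfalso
      rw [getVert_zero, getVert_cons_succ] at hij
      have : q.getVert j ∈ q.support :=
        mem_support_iff_exists_getVert.2 ⟨j, rfl, by simpa using hj⟩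
      rw [← hij] at this
      exact ((cons_isPath_iff _ _).1 hp).2 this
    | (i+1), 0 =>
      exfalso
      rw [getVert_zero, getVert_cons_succ] at hij
      have : q.getVert i ∈ q.support :=
        mem_support_iff_exists_getVert.2 ⟨i, rfl, by simpa using hi⟩
      rw [hij] at this
      exact ((cons_isPath_iff _ _).1 hp).2 this
    | (i+1), (j+1) =>
      rw [getVert_cons_succ, getVert_cons_succ] at hij
      have := ih ((cons_isPath_iff _ _).1 hp).1 i (by simpa using hi) j (by simpa using hj) hij
      omega

lemma length_drop' {u v : V} (p : G.Walk u v) (n : ℕ) :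
    (p.drop n).length = p.length - n := by
  induction p generalizing n with
  | nil => simp [drop]
  | cons h q ih =>
    match n with
    | 0 => simp [drop]
    | (n+1) => simpa [drop] using ih n

lemma getVert_drop' {u v : V} (p : G.Walk u v) (n i : ℕ) :
    (p.drop n).getVert i = p.getVert (n + i) := by
  induction p generalizing n with
  | nil => cases n <;> cases i <;> rfl
  | cons h q ih =>
    match n with
    | 0 => simp [drop]
    | (n+1) =>
      simp only [drop, getVert_copy]
      have : n + 1 + i = (n + i) + 1 := by omega
      exact (ih n).trans (by rw [this, getVert_cons_succ])

lemma isPath_drop' {u v : V} {p : G.Walk u v} (hp : p.IsPath) (n : ℕ) :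
    (p.drop n).IsPath := by
  induction p generalizing n with
  | nil => simp only [drop]; exact hp
  | cons h q ih =>
    match n with
    | 0 => simpa [drop] using hp
    | (n+1) =>
      simp only [drop, isPath_copy]
      exact ih ((cons_isPath_iff _ _).1 hp).1 n

lemma mem_support_drop' {u v x : V} (p : G.Walk u v) (n : ℕ) (hn : n ≤ p.length)
    (hx : x ∈ (p.drop n).support) :
    ∃ k, n ≤ k ∧ k ≤ p.length ∧ p.getVert k = x := by
  obtain ⟨m, hm, hmle⟩ := mem_support_iff_exists_getVert.1 hx
  rw [getVert_drop'] at hm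
  rw [length_drop'] at hmle
  exact ⟨n + m, by omega, by omega, hm⟩

lemma interior_nbrs {u v : V} {p : G.Walk u v} (hp : p.IsPath) {k : ℕ}
    (h1 : 0 < k) (h2 : k < p.length) :
    G.Adj (p.getVert k) (p.getVert (k-1)) ∧ G.Adj (p.getVert k) (p.getVert (k+1)) ∧
      p.getVert (k-1) ≠ p.getVert (k+1) := by
  obtain ⟨k, rfl⟩ : ∃ m, k = m + 1 := ⟨k - 1, by omega⟩
  refine ⟨(p.adj_getVert_succ (by omega)).symm, p.adj_getVert_succ (by omega), fun heq => ?_⟩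
  have := getVert_injOn' hp k (by omega) (k + 1 + 1) (by omega) (by simpa using heq)
  omega

/-- In a tree, adjacency of two vertices on a path implies consecutive positions. -/
lemma tree_adj_consec (hT : G.IsTree) {u v : V} {p : G.Walk u v} (hp : p.IsPath)
    {i j : ℕ} (hij : i < j) (hj : j ≤ p.length)
    (ha : G.Adj (p.getVert i) (p.getVert j)) : j = i + 1 := by
  have hd2 : (p.drop j).IsPath := isPath_drop' hp j
  have hxn : p.getVert i ∉ (p.drop j).support := by
    intro hmem
    obtain ⟨k, hk1, hk2, hk3⟩ := mem_support_drop' p j hj hmem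
    have := getVert_injOn' hp k hk2 i (by omega) hk3
    omega
  have hw : (Walk.cons ha (p.drop j)).IsPath := (cons_isPath_iff _ _).2 ⟨hd2, hxn⟩
  have hd1 : (p.drop i).IsPath := isPath_drop' hp i
  obtain ⟨q, -, hq⟩ := hT.existsUnique_path (p.getVert i) v
  have h1 := hq _ hw
  have h2 := hq _ hd1
  have := congrArg Walk.length (h1.trans h2.symm)
  simp only [length_cons, length_drop'] at this
  omega

/-- A vertex whose neighborhood is a subsingleton lies on a path only as an endpoint. -/
lemma leaf_endpoint {u v ℓ : V} {p : G.Walk u v} (hp : p.IsPath)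
    (hℓ : ∀ a b, G.Adj ℓ a → G.Adj ℓ b → a = b) (hmem : ℓ ∈ p.support) :
    ℓ = u ∨ ℓ = v := by
  obtain ⟨k, hk, hkle⟩ := mem_support_iff_exists_getVert.1 hmem
  rcases Nat.eq_zero_or_pos k with h0 | h0
  · left; rw [← hk, h0, getVert_zero]
  rcases eq_or_lt_of_le hkle with hL | hL
  · right; rw [← hk, hL, getVert_length]
  exfalso
  obtain ⟨a1, a2, hne⟩ := interior_nbrs hp h0 hL
  rw [hk] at a1 a2
  exact hne (hℓ _ _ a1 a2)

end SimpleGraph.Walk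

section
variable {V : Type*} [Fintype V] {G : SimpleGraph V}

lemma top_subgraph_mem (hT : G.IsTree) :
    ∃ H : G.Subgraph, H.Connected ∧ (Set.univ : Set V) ⊆ H.verts ∧
      H.edgeSet.ncard = Fintype.card V - 1 := by
  classical
  refine ⟨⊤, ?_, by simp, ?_⟩
  · rw [Subgraph.connected_iff_forall_exists_walk_subgraph]
    refine ⟨⟨hT.isConnected.nonempty.some, by simp⟩, fun {u v} _ _ => ?_⟩
    exact (hT.isConnected.preconnected u v).elim fun p => ⟨p, le_top⟩
  · rw [Subgraph.edgeSet_top]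
    have h2 := hT.card_edgeFinset
    have h3 : G.edgeSet.ncard = #G.edgeFinset := by
      rw [Set.ncard_eq_toFinset_card']; try congr!
    omega

lemma steiner_le (hT : G.IsTree) (S : Set V) : steinerDist G S ≤ Fintype.card V - 1 := by
  obtain ⟨H, h1, h2, h3⟩ := top_subgraph_mem hT
  exact Nat.sInf_le ⟨H, h1, fun x _ => h2 (Set.mem_univ x), h3⟩

lemma path_length_le_ncard (hT : G.IsTree) {H : G.Subgraph} (hH : H.Connected)
    {u₀ u₁ : V} (h0 : u₀ ∈ H.verts) (h1 : u₁ ∈ H.verts) {q : G.Walk u₀ u₁}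
    (hq : q.IsPath) : q.length ≤ H.edgeSet.ncard := by
  classical
  obtain ⟨p, hple⟩ := (Subgraph.preconnected_iff_forall_exists_walk_subgraph H).1
    hH.preconnected h0 h1
  have hbp : p.bypass.IsPath := p.bypass_isPath
  obtain ⟨r, -, hr⟩ := hT.existsUnique_path u₀ u₁
  have hqb : q = p.bypass := (hr _ hq).trans (hr _ hbp).symm
  have hsub : ∀ e ∈ q.edges, e ∈ H.edgeSet := by
    intro e he
    rw [hqb] at he
    have : e ∈ p.edges := p.edges_bypass_subset he
    have : e ∈ p.toSubgraph.edgeSet := by rwa [Walk.edgeSet_toSubgraph]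
    exact Subgraph.edgeSet_mono hple this
  have hnd : q.edges.Nodup := hq.isTrail.edges_nodup
  calc q.length = q.edges.toFinset.card := by
        rw [List.toFinset_card_of_nodup hnd, q.length_edges]
    _ = (↑q.edges.toFinset : Set (Sym2 V)).ncard := (Set.ncard_coe_finset _).symm
    _ ≤ H.edgeSet.ncard := Set.ncard_le_ncard (fun e he => hsub e (by simpa using he)) (Set.toFinite _)

lemma steiner_del_leaf [DecidableEq V] [DecidableRel G.Adj] (hT : G.IsTree) {ℓ : V}
    (hdeg : G.degree ℓ = 1) (hcard : 2 ≤ Fintype.card V) {S : Set V} (hS : ℓ ∉ S) :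
    steinerDist G S ≤ Fintype.card V - 2 := by
  have hsub : ∀ a b, G.Adj ℓ a → G.Adj ℓ b → a = b := by
    intro a b ha hb
    exact Finset.card_le_one.1 (le_of_eq hdeg)
      a (by simp [ha]) b (by simp [hb])
  set H := (⊤ : G.Subgraph).deleteVerts {ℓ} with hH
  have hverts : H.verts = Set.univ \ {ℓ} := by
    rw [hH, Subgraph.deleteVerts_verts, Subgraph.verts_top]
  have hconn : H.Connected := by
    rw [Subgraph.connected_iff_forall_exists_walk_subgraph]
    constructor
    · obtain ⟨u, hu⟩ := Fintype.exists_ne_of_one_lt_card (by omega) ℓ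
      exact ⟨u, by simp [hverts, hu]⟩
    · intro u v hu hv
      obtain ⟨p, hp, -⟩ := hT.existsUnique_path u v
      have hu' : u ≠ ℓ := by rw [hverts] at hu; simpa using hu.2
      have hv' : v ≠ ℓ := by rw [hverts] at hv; simpa using hv.2
      have hns : ℓ ∉ p.support := by
        intro hmem
        rcases Walk.leaf_endpoint hp hsub hmem with h | h
        · exact hu' h.symm
        · exact hv' h.symm
      refine ⟨p, ?_, ?_⟩
      · intro x hx
        rw [Walk.verts_toSubgraph] at hx
        rw [hverts]
        exact ⟨trivial, fun h => hns (h ▸ hx)⟩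
      · intro a b hab
        have hga : G.Adj a b := hab.adj_sub
        have ha : a ∈ p.toSubgraph.verts := hab.fst_mem
        have hb : b ∈ p.toSubgraph.verts := hab.snd_mem
        rw [Walk.verts_toSubgraph] at ha hb
        rw [hH, Subgraph.deleteVerts_adj]
        exact ⟨trivial, fun h => hns (h ▸ ha), trivial, fun h => hns (h ▸ hb), hga⟩
  have hedge : H.edgeSet = G.edgeSet \ G.incidenceSet ℓ := by
    ext e
    induction e with
    | _ a b =>
      simp only [Subgraph.mem_edgeSet, hH, Subgraph.deleteVerts_adj, Subgraph.verts_top,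
        Set.mem_univ, Set.mem_singleton_iff, true_and, Subgraph.top_adj, Set.mem_diff,
        mem_edgeSet, incidenceSet, Set.mem_setOf_eq, Sym2.mem_iff]
      tauto
  have hcount : H.edgeSet.ncard = Fintype.card V - 2 := by
    rw [hedge, Set.ncard_diff (G.incidenceSet_subset ℓ) (Set.toFinite _)]
    have h1 : (G.incidenceSet ℓ).ncard = 1 := by
      rw [Set.ncard_eq_toFinset_card', Set.toFinset_card, G.card_incidenceSet_eq_degree, hdeg]
    have h2 : G.edgeSet.ncard = Fintype.card V - 1 := by
      rw [Set.ncard_eq_toFinset_card']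
      have h2 := hT.card_edgeFinset
      have : G.edgeSet.toFinset.card = #G.edgeFinset := by congr!
      omega
    rw [h1, h2]
    omega
  refine Nat.sInf_le ⟨H, hconn, ?_, hcount⟩
  intro x hx
  rw [hverts]
  exact ⟨trivial, fun h => hS (h ▸ hx)⟩

lemma three_leaves [DecidableEq V] [DecidableRel G.Adj] (hT : G.IsTree)
    (hcard : 2 ≤ Fintype.card V) {w : V} (hw : 3 ≤ G.degree w) :
    3 ≤ #(univ.filter fun v => G.degree v = 1) := by
  have hmin : ∀ v : V, 1 ≤ G.degree v := by
    intro v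
    rw [Nat.succ_le_iff, degree_pos_iff_exists_adj]
    obtain ⟨u, hu⟩ := Fintype.exists_ne_of_one_lt_card (by omega) v
    refine (hT.isConnected.preconnected v u).elim fun p => ?_
    cases p with
    | nil => exact absurd rfl hu.symm
    | cons h q => exact ⟨_, h⟩
  set A := univ.filter fun v => G.degree v = 1 with hA
  set B := univ.filter fun v => ¬ G.degree v = 1 with hB
  have hwB : w ∈ B := by simp [hB]; omega
  have hsplit : (∑ v ∈ A, G.degree v) + ∑ v ∈ B, G.degree v = ∑ v, G.degree v :=
    Finset.sum_filter_add_sum_filter_not univ _ _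
  have hAsum : ∑ v ∈ A, G.degree v = #A := by
    rw [Finset.sum_congr rfl (fun v hv => by simpa [hA] using (Finset.mem_filter.1 hv).2)]
    simp
  have hBsum : G.degree w + ∑ v ∈ B.erase w, G.degree v = ∑ v ∈ B, G.degree v :=
    Finset.add_sum_erase B (fun v => G.degree v) hwB
  have hcBe : #(B.erase w) = #B - 1 := Finset.card_erase_of_mem hwB
  have h1 : 2 * #(B.erase w) ≤ ∑ v ∈ B.erase w, G.degree v := by
      calc 2 * #(B.erase w) = #(B.erase w) * 2 := by ring
        _ = ∑ _v ∈ B.erase w, 2 := by rw [Finset.sum_const, smul_eq_mul]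
        _ ≤ ∑ v ∈ B.erase w, G.degree v := by
            refine Finset.sum_le_sum fun v hv => ?_
            have h3 := hmin v
            have h4 : ¬ G.degree v = 1 := by
              have := (Finset.mem_filter.1 (Finset.mem_of_mem_erase hv)).2
              simpa [hB] using this
            omega
  have hcardAB : #A + #B = Fintype.card V := by
    rw [hA, hB, Finset.card_filter_add_card_filter_not, Finset.card_univ]
  have he1 := G.sum_degrees_eq_twice_card_edges
  have he2 := hT.card_edgeFinset
  have hB1 : 1 ≤ #B := Finset.card_pos.2 ⟨w, hwB⟩
  omega

lemma ham_of_maxdeg2 [DecidableEq V] [DecidableRel G.Adj] (hT : G.IsTree)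
    (hcard : 3 ≤ Fintype.card V) (hdeg : ∀ v, G.degree v ≤ 2) :
    ∃ (u v : V) (p : G.Walk u v), p.IsPath ∧ ∀ x, x ∈ p.support := by
  have hne : Nonempty V := Fintype.card_pos_iff.1 (by omega)
  set L : Set ℕ := {l : ℕ | ∃ (u v : V) (p : G.Walk u v), p.IsPath ∧ p.length = l} with hL
  have hLne : L.Nonempty := ⟨0, hne.some, hne.some, Walk.nil, Walk.IsPath.nil, rfl⟩
  have hbdd : BddAbove L := by
    refine ⟨Fintype.card V, fun l hl => ?_⟩
    obtain ⟨u, v, p, hp, rfl⟩ := hl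
    exact (hp.length_lt).le
  obtain ⟨u, v, p, hp, hplen⟩ := Nat.sSup_mem hLne hbdd
  have hmax : ∀ (a b : V) (q : G.Walk a b), q.IsPath → q.length ≤ p.length := by
    intro a b q hq
    rw [hplen]
    exact le_csSup hbdd ⟨a, b, q, hq, rfl⟩
  refine ⟨u, v, p, hp, fun w => ?_⟩
  by_contra hw
  have hlen1 : 1 ≤ p.length := by
    obtain ⟨x, hx⟩ : ∃ x, G.Adj u x := by
      obtain ⟨y, hy⟩ := Fintype.exists_ne_of_one_lt_card (by omega) u
      refine (hT.isConnected.preconnected u y).elim fun r => ?_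
      cases r with
      | nil => exact absurd rfl hy.symm
      | cons h q => exact ⟨_, h⟩
    have : (Walk.cons hx Walk.nil).IsPath := by
      simp [Walk.cons_isPath_iff, hx.ne]
    simpa using hmax _ _ _ this
  obtain ⟨r⟩ := hT.isConnected.preconnected w u
  obtain ⟨d, -, hd1, hd2⟩ := r.exists_boundary_dart {x | x ∉ p.support} hw
    (by simp [p.start_mem_support])
  simp only [Set.mem_setOf_eq, not_not] at hd1 hd2
  obtain ⟨k, hk, hkle⟩ := Walk.mem_support_iff_exists_getVert.1 hd2
  have hadj : G.Adj d.fst (p.getVert k) := hk ▸ d.adj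
  rcases Nat.eq_zero_or_pos k with h0 | h0
  · have : (Walk.cons (by rwa [h0, Walk.getVert_zero] at hadj) p).IsPath :=
      (Walk.cons_isPath_iff _ _).2 ⟨hp, hd1⟩
    have := hmax _ _ _ this
    simp at this
  rcases eq_or_lt_of_le hkle with hL' | hL'
  · have hadj' : G.Adj d.fst v := by rwa [hL', Walk.getVert_length] at hadj
    have : (Walk.cons hadj' p.reverse).IsPath := by
      refine (Walk.cons_isPath_iff _ _).2 ⟨hp.reverse, ?_⟩
      rwa [Walk.support_reverse, List.mem_reverse]
    have := hmax _ _ _ this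
    simp at this
  obtain ⟨ha1, ha2, hne'⟩ := Walk.interior_nbrs hp h0 hL'
  set z := p.getVert k
  set a := p.getVert (k-1)
  set b := p.getVert (k+1)
  have hamem : a ∈ p.support := Walk.mem_support_iff_exists_getVert.2 ⟨k-1, rfl, by omega⟩
  have hbmem : b ∈ p.support := Walk.mem_support_iff_exists_getVert.2 ⟨k+1, rfl, by omega⟩
  have hya : d.fst ≠ a := fun h => hd1 (h ▸ hamem)
  have hyb : d.fst ≠ b := fun h => hd1 (h ▸ hbmem)
  have hsubset : ({a, b, d.fst} : Finset V) ⊆ G.neighborFinset z := by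
    intro x hx
    simp only [Finset.mem_insert, Finset.mem_singleton] at hx
    rcases hx with rfl | rfl | rfl
    · simpa using ha1
    · simpa using ha2
    · simpa using hadj.symm
  have h3 : 3 ≤ #(G.neighborFinset z) := by
    refine le_trans (le_of_eq ?_) (Finset.card_le_card hsubset)
    rw [Finset.card_insert_of_notMem (by simp [hne', hya.symm]),
      Finset.card_insert_of_notMem (by simp [hyb.symm]), Finset.card_singleton]
  have := hdeg z
  rw [← G.card_neighborFinset_eq_degree] at this
  omega

lemma iso_of_ham [DecidableEq V] (hT : G.IsTree) (hcard : 1 ≤ Fintype.card V) {u v : V}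
    {p : G.Walk u v} (hp : p.IsPath) (hall : ∀ x, x ∈ p.support) :
    Nonempty (G ≃g SimpleGraph.pathGraph (Fintype.card V)) := by
  classical
  have hsuplen : p.support.length = Fintype.card V := by
    have h1 : p.support.toFinset = Finset.univ := by
      ext x; simp [hall]
    have h2 := List.toFinset_card_of_nodup hp.support_nodup
    rw [h1] at h2
    simp only [Finset.card_univ] at h2
    omega
  have hlen : p.length = Fintype.card V - 1 := by
    have := p.length_support
    omega
  set n := Fintype.card V
  have hfn : ∀ i : Fin n, (i : ℕ) ≤ p.length := fun i => by have := i.2; omega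
  set f : Fin n → V := fun i => p.getVert i with hf
  have hinj : Function.Injective f := by
    intro i j hij
    exact Fin.ext (Walk.getVert_injOn' hp i (hfn i) j (hfn j) hij)
  have hbij : Function.Bijective f :=
    (Fintype.bijective_iff_injective_and_card f).2 ⟨hinj, by simp [n]⟩
  refine ⟨(RelIso.mk (Equiv.ofBijective f hbij) ?_).symm⟩
  intro i j
  simp only [Equiv.ofBijective_apply]
  constructor
  · intro hadj
    rw [pathGraph_adj]
    rcases lt_trichotomy (i : ℕ) (j : ℕ) with h | h | h
    · left
      exact (Walk.tree_adj_consec hT hp h (hfn j) hadj).symm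
    · exact absurd (Fin.ext h ▸ hadj) (G.irrefl)
    · right
      exact (Walk.tree_adj_consec hT hp h (hfn i) hadj.symm).symm
  · intro hadj
    rw [pathGraph_adj] at hadj
    rcases hadj with h | h
    · have : (i : ℕ) < p.length := by have := j.2; omega
      have := p.adj_getVert_succ this
      rwa [h] at this
    · have : (j : ℕ) < p.length := by have := i.2; omega
      have := p.adj_getVert_succ this
      rw [h] at this
      exact this.symm

lemma pg_walk (m : ℕ) : ∀ k ≤ m, ∃ q : (SimpleGraph.pathGraph (m+1)).Walk
    ⟨m - k, by omega⟩ ⟨m, by omega⟩, q.IsPath ∧ q.length = k ∧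
      ∀ x ∈ q.support, m - k ≤ (x : Fin (m+1)).val := by
  intro k
  induction k with
  | zero => exact fun _ => ⟨Walk.nil, Walk.IsPath.nil, rfl, by simp⟩
  | succ k ih =>
    intro hk
    obtain ⟨q, hq, hqlen, hqsup⟩ := ih (by omega)
    have hadj : (SimpleGraph.pathGraph (m+1)).Adj ⟨m - (k+1), by omega⟩ ⟨m - k, by omega⟩ := by
      rw [pathGraph_adj]; left; simp; omega
    refine ⟨Walk.cons hadj q, ?_, by simp [hqlen], ?_⟩
    · refine (Walk.cons_isPath_iff _ _).2 ⟨hq, fun hmem => ?_⟩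
      have := hqsup _ hmem
      simp at this
      omega
    · intro x hx
      rw [Walk.support_cons, List.mem_cons] at hx
      rcases hx with rfl | hx
      · simp
      · have := hqsup _ hx; omega

lemma exists_long_path {k : ℕ} (f : G ≃g SimpleGraph.pathGraph k) (hk : 1 ≤ k) :
    ∃ (a b : V) (r : G.Walk a b), r.IsPath ∧ r.length = k - 1 := by
  obtain ⟨m, rfl⟩ := Nat.exists_eq_succ_of_ne_zero (by omega : k ≠ 0)
  obtain ⟨q, hq, hqlen, -⟩ := pg_walk m m le_rfl
  refine ⟨_, _, q.map f.symm.toHom, ?_, ?_⟩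
  · exact Walk.map_isPath_of_injective f.symm.toEquiv.injective hq
  · rw [Walk.length_map, hqlen]; omega

lemma ecc3_mem_nonempty [DecidableEq V] (hcard : 3 ≤ Fintype.card V) (v : V) :
    {n | ∃ S : Finset V, v ∈ S ∧ S.card = 3 ∧ steinerDist G (S : Set V) = n}.Nonempty := by
  obtain ⟨S, hvS, hS3⟩ := Finset.exists_superset_card_eq
    (s := {v}) (by simp : #({v} : Finset V) ≤ 3) hcard
  exact ⟨steinerDist G S, S, hvS (by simp), hS3, rfl⟩

lemma ecc3_le [DecidableEq V] (hT : G.IsTree) (hcard : 3 ≤ Fintype.card V) (v : V) :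
    ecc3 G v ≤ Fintype.card V - 1 := by
  refine csSup_le (ecc3_mem_nonempty hcard v) ?_
  rintro n ⟨S, -, -, rfl⟩
  exact steiner_le hT _

lemma ecc3_eq_of_iso [DecidableEq V] (hT : G.IsTree) (hcard : 3 ≤ Fintype.card V)
    (f : G ≃g SimpleGraph.pathGraph (Fintype.card V)) (v : V) :
    ecc3 G v = Fintype.card V - 1 := by
  refine le_antisymm (ecc3_le hT hcard v) ?_
  obtain ⟨a, b, r, hr, hrlen⟩ := exists_long_path f (by omega)
  have hab : a ≠ b := by
    rintro rfl
    rw [Walk.isPath_iff_eq_nil] at hr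
    subst hr
    simp at hrlen
    omega
  obtain ⟨S, haS, hbS, hvS, hS3⟩ :
      ∃ S : Finset V, a ∈ S ∧ b ∈ S ∧ v ∈ S ∧ #S = 3 := by
    by_cases hv : v = a ∨ v = b
    · have h2 : #({a, b} : Finset V) ≤ 3 := le_trans (Finset.card_insert_le _ _) (by simp)
      obtain ⟨S, hsub, hS3⟩ := Finset.exists_superset_card_eq h2 hcard
      refine ⟨S, hsub (by simp), hsub (by simp), ?_, hS3⟩
      rcases hv with rfl | rfl
      · exact hsub (by simp)
      · exact hsub (by simp)
    · push_neg at hv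
      refine ⟨{v, a, b}, by simp, by simp, by simp, ?_⟩
      rw [Finset.card_insert_of_notMem (by simp [hv.1, hv.2]),
        Finset.card_insert_of_notMem (by simp [hab]), Finset.card_singleton]
  have hlow : Fintype.card V - 1 ≤ steinerDist G (S : Set V) := by
    refine le_csInf ?_ ?_
    · obtain ⟨H, h1, h2, h3⟩ := top_subgraph_mem hT
      exact ⟨_, H, h1, fun x _ => h2 (Set.mem_univ x), h3⟩
    · rintro n ⟨H, hc, hsub, rfl⟩
      calc Fintype.card V - 1 = r.length := hrlen.symm
        _ ≤ H.edgeSet.ncard := path_length_le_ncard hT hc (hsub (by exact_mod_cast haS))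
            (hsub (by exact_mod_cast hbS)) hr
  refine le_trans hlow (le_csSup ?_ ⟨S, hvS, hS3, rfl⟩)
  refine ⟨Fintype.card V - 1, ?_⟩
  rintro n ⟨S', -, -, rfl⟩
  exact steiner_le hT _

end

theorem stmt_13 {V : Type*} [Fintype V] [DecidableEq V] (G : SimpleGraph V)
    (hT : G.IsTree) (hn : 3 ≤ Fintype.card V) :
    aecc3 G ≤ (Fintype.card V : ℚ) - 1 ∧
    (aecc3 G = (Fintype.card V : ℚ) - 1 ↔
      Nonempty (G ≃g SimpleGraph.pathGraph (Fintype.card V))) := by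
  classical
  have hnq : (0:ℚ) < (Fintype.card V : ℚ) := by exact_mod_cast (by omega : 0 < Fintype.card V)
  have hcast : ((Fintype.card V - 1 : ℕ) : ℚ) = (Fintype.card V : ℚ) - 1 := by
    rw [Nat.cast_sub (by omega)]; simp
  have hub : ∀ v : V, (ecc3 G v : ℚ) ≤ (Fintype.card V : ℚ) - 1 := fun v => by
    rw [← hcast]; exact_mod_cast ecc3_le hT hn v
  have hsum_le : ∑ v : V, (ecc3 G v : ℚ) ≤ (Fintype.card V : ℚ) * ((Fintype.card V : ℚ) - 1) := by
    calc ∑ v : V, (ecc3 G v : ℚ) ≤ ∑ _v : V, ((Fintype.card V : ℚ) - 1) :=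
        Finset.sum_le_sum fun v _ => hub v
      _ = (Fintype.card V : ℚ) * ((Fintype.card V : ℚ) - 1) := by
        rw [Finset.sum_const, Finset.card_univ, nsmul_eq_mul]
  have hupper : aecc3 G ≤ (Fintype.card V : ℚ) - 1 := by
    rw [aecc3, div_le_iff₀ hnq]
    calc ∑ v : V, (ecc3 G v : ℚ) ≤ (Fintype.card V : ℚ) * ((Fintype.card V : ℚ) - 1) := hsum_le
      _ = ((Fintype.card V : ℚ) - 1) * (Fintype.card V : ℚ) := by ring
  refine ⟨hupper, ?_, ?_⟩
  · intro heq
    have hall : ∀ v, ecc3 G v = Fintype.card V - 1 := by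
      by_contra hex
      push_neg at hex
      obtain ⟨w, hw⟩ := hex
      have hwlt : (ecc3 G w : ℚ) < (Fintype.card V : ℚ) - 1 := by
        rw [← hcast]
        exact_mod_cast lt_of_le_of_ne (ecc3_le hT hn w) hw
      have hslt : ∑ v : V, (ecc3 G v : ℚ) <
          (Fintype.card V : ℚ) * ((Fintype.card V : ℚ) - 1) := by
        calc ∑ v : V, (ecc3 G v : ℚ) < ∑ _v : V, ((Fintype.card V : ℚ) - 1) :=
            Finset.sum_lt_sum (fun i _ => hub i) ⟨w, Finset.mem_univ w, hwlt⟩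
          _ = (Fintype.card V : ℚ) * ((Fintype.card V : ℚ) - 1) := by
            rw [Finset.sum_const, Finset.card_univ, nsmul_eq_mul]
      have hlt : aecc3 G < (Fintype.card V : ℚ) - 1 := by
        rw [aecc3, div_lt_iff₀ hnq]
        calc ∑ v : V, (ecc3 G v : ℚ) < (Fintype.card V : ℚ) * ((Fintype.card V : ℚ) - 1) := hslt
          _ = ((Fintype.card V : ℚ) - 1) * (Fintype.card V : ℚ) := by ring
      rw [heq] at hlt
      exact lt_irrefl _ hlt
    have hdeg : ∀ v, G.degree v ≤ 2 := by
      by_contra hex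
      push_neg at hex
      obtain ⟨w, hw3⟩ := hex
      have hw3' : 3 ≤ G.degree w := hw3
      have hL := three_leaves hT (by omega) hw3'
      have hbdd : BddAbove {n | ∃ S : Finset V, w ∈ S ∧ #S = 3 ∧ steinerDist G ↑S = n} :=
        ⟨Fintype.card V - 1, by rintro m ⟨S, -, -, rfl⟩; exact steiner_le hT _⟩
      obtain ⟨S, hwS, hS3, hSdist⟩ := Nat.sSup_mem (ecc3_mem_nonempty hn w) hbdd
      have hSd : steinerDist G (S : Set V) = Fintype.card V - 1 := by
        rw [hSdist]
        exact hall w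
      obtain ⟨ℓ, hℓ1, hℓS⟩ : ∃ ℓ, G.degree ℓ = 1 ∧ ℓ ∉ S := by
        by_contra h
        push_neg at h
        have hsub : (univ.filter fun v => G.degree v = 1) ⊆ S.erase w := by
          intro x hx
          rw [Finset.mem_filter] at hx
          refine Finset.mem_erase.2 ⟨?_, h x hx.2⟩
          rintro rfl
          omega
        have := Finset.card_le_card hsub
        rw [Finset.card_erase_of_mem hwS, hS3] at this
        omega
      have hdel := steiner_del_leaf hT hℓ1 (by omega)
        (S := (S : Set V)) (fun hc => hℓS (by exact_mod_cast hc))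
      rw [hSd] at hdel
      omega
    obtain ⟨u, v', p, hp, hall'⟩ := ham_of_maxdeg2 hT hn hdeg
    exact iso_of_ham hT (by omega) hp hall'
  · rintro ⟨f⟩
    have hall : ∀ v, ecc3 G v = Fintype.card V - 1 := ecc3_eq_of_iso hT hn f
    rw [aecc3]
    have hsum : ∑ v : V, (ecc3 G v : ℚ) = (Fintype.card V : ℚ) * ((Fintype.card V : ℚ) - 1) := by
      calc ∑ v : V, (ecc3 G v : ℚ) = ∑ _v : V, ((Fintype.card V : ℚ) - 1) :=
          Finset.sum_congr rfl (fun v _ => by rw [hall v]; exact hcast)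
        _ = (Fintype.card V : ℚ) * ((Fintype.card V : ℚ) - 1) := by
          rw [Finset.sum_const, Finset.card_univ, nsmul_eq_mul]
    rw [hsum, mul_comm, mul_div_assoc, div_self hnq.ne', mul_one]
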